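/- Let (X_j) be a sequence in [0,1], P_j = X_j ∏_{i<j}(1 - X_i), and let u : ℕ → ℕ be strictly increasing with u_1 = 1. Define P^u_j = ∑_{i=u_j}^{u_{j+1}-1} P_i and X^u_j = 1 - ∏_{i=u_j}^{u_{j+1}-1}(1 - X_i). Then P^u_j = X^u_j ∏_{i=1}^{j-1}(1 - X^u_i) for every j ≥ 1. -/

import Mathlib

theorem stmt3 (X : ℕ → ℝ) (hX : ∀ j, X j ∈ Set.Icc (0:ℝ) 1)
    (P : ℕ → ℝ) (hP : ∀ j, P j = X j * ∏ i ∈ Finset.range j, (1 - X i))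
    (u : ℕ → ℕ) (hu : StrictMono u) (hu0 : u 0 = 0)
    (Pu Xu : ℕ → ℝ)
    (hPu : ∀ j, Pu j = ∑ i ∈ Finset.Ico (u j) (u (j+1)), P i)
    (hXu : ∀ j, Xu j = 1 - ∏ i ∈ Finset.Ico (u j) (u (j+1)), (1 - X i)) :
    ∀ j, Pu j = Xu j * ∏ i ∈ Finset.range j, (1 - Xu i) := by
  have key : ∀ a b : ℕ, a ≤ b →
      (∏ i ∈ Finset.range a, (1 - X i)) * ∏ i ∈ Finset.Ico a b, (1 - X i)
        = ∏ i ∈ Finset.range b, (1 - X i) := by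
    intro a b h
    rw [Finset.range_eq_Ico, Finset.range_eq_Ico]
    exact Finset.prod_Ico_consecutive (fun i => 1 - X i) (Nat.zero_le a) h
  have hsum : ∀ n, ∑ i ∈ Finset.range n, P i = 1 - ∏ i ∈ Finset.range n, (1 - X i) := by
    intro n
    induction n with
    | zero => simp
    | succ n ih =>
      rw [Finset.sum_range_succ, ih, hP n, Finset.prod_range_succ]
      ring
  have hprod : ∀ j, ∏ i ∈ Finset.range j, (1 - Xu i) = ∏ i ∈ Finset.range (u j), (1 - X i) := by
    intro j
    induction j with
    | zero => simp [hu0]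
    | succ j ih =>
      rw [Finset.prod_range_succ, ih, hXu j, sub_sub_cancel]
      exact key _ _ (le_of_lt (hu (Nat.lt_succ_self j)))
  intro j
  have h := le_of_lt (hu (Nat.lt_succ_self j))
  rw [hPu j, Finset.sum_Ico_eq_sub _ h, hsum, hsum, hXu j, hprod j]
  linear_combination key (u j) (u (j+1)) h
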